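/- With β^k defined as the (k+1)-fold self-convolution of the centered unit rectangle β⁰, one has the closed-form representation β^k(t) = (1/k!) Σ_{j=0}^{k+1} C(k+1, j) (-1)^j (t + (k+1)/2 - j)₊^k for every k ≥ 1 and t ∈ ℝ, where x₊ = max(x, 0) and C(k+1,j) is a binomial coefficient. -/

import Mathlib

open MeasureTheory Real

/-- The centered unit rectangle `β⁰`. -/
noncomputable def beta0 : ℝ → ℝ := fun t =>
  if |t| < 1 / 2 then 1 else if |t| = 1 / 2 then 1 / 2 else 0

/-- `β^k`, the `(k+1)`-fold self-convolution of `β⁰`: `β^k = β^{k-1} ⋆ β⁰`. -/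
noncomputable def betaB : ℕ → ℝ → ℝ
  | 0 => beta0
  | (k + 1) => fun t => ∫ s, betaB k s * beta0 (t - s)



open Set Filter

lemma beta0_eq_of_ne (x : ℝ) (h1 : x ≠ 1/2) (h2 : x ≠ -(1/2)) :
    beta0 x = (Set.Ioo (-(1/2) : ℝ) (1/2)).indicator 1 x := by
  have habs : |x| ≠ 1/2 := by
    intro h
    rcases (abs_eq (by norm_num : (0:ℝ) ≤ 1/2)).mp h with h | h
    · exact h1 h
    · exact h2 h
  rcases lt_or_gt_of_ne habs with h | h
  · have hx : x ∈ Set.Ioo (-(1/2):ℝ) (1/2) := ⟨(abs_lt.mp h).1, (abs_lt.mp h).2⟩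
    rw [Set.indicator_of_mem hx]
    simp only [beta0, if_pos h, Pi.one_apply]
  · have hx : x ∉ Set.Ioo (-(1/2):ℝ) (1/2) := by
      intro hx
      exact absurd (abs_lt.mpr ⟨hx.1, hx.2⟩) (not_lt.mpr h.le)
    rw [Set.indicator_of_notMem hx]
    simp only [beta0, if_neg (not_lt.mpr h.le), if_neg habs]

lemma beta0_shift_ae (t : ℝ) :
    (fun s => beta0 (t - s)) =ᵐ[volume] (Set.Ioo (t - 1/2) (t + 1/2)).indicator 1 := by
  have hnull : volume ({t - 1/2, t + 1/2} : Set ℝ) = 0 :=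
    measure_union_null (measure_singleton _) (measure_singleton _)
  refine measure_mono_null (fun s hs => ?_) hnull
  rw [Set.mem_compl_iff, Set.mem_setOf_eq] at hs
  by_contra hmem
  simp only [Set.mem_insert_iff, Set.mem_singleton_iff] at hmem
  push_neg at hmem
  apply hs
  show beta0 (t - s) = _
  have h1 : t - s ≠ 1/2 := fun h => hmem.1 (by linarith)
  have h2 : t - s ≠ -(1/2) := fun h => hmem.2 (by linarith)
  rw [beta0_eq_of_ne _ h1 h2]
  have hiff : t - s ∈ Set.Ioo (-(1/2):ℝ) (1/2) ↔ s ∈ Set.Ioo (t - 1/2) (t + 1/2) := by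
    simp only [Set.mem_Ioo]
    constructor <;> (rintro ⟨ha, hb⟩; constructor <;> linarith)
  by_cases hm : s ∈ Set.Ioo (t - 1/2) (t + 1/2)
  · simp only [Set.indicator_of_mem (hiff.mpr hm), Set.indicator_of_mem hm, Pi.one_apply]
  · rw [Set.indicator_of_notMem (fun hh => hm (hiff.mp hh)), Set.indicator_of_notMem hm]

lemma beta0_ae :
    beta0 =ᵐ[volume] (Set.Ioo (-(1/2) : ℝ) (1/2)).indicator 1 := by
  have hnull : volume ({-(1/2), 1/2} : Set ℝ) = 0 :=
    measure_union_null (measure_singleton _) (measure_singleton _)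
  refine measure_mono_null (fun s hs => ?_) hnull
  rw [Set.mem_compl_iff, Set.mem_setOf_eq] at hs
  by_contra hmem
  simp only [Set.mem_insert_iff, Set.mem_singleton_iff] at hmem
  push_neg at hmem
  exact hs (beta0_eq_of_ne _ hmem.2 hmem.1)

lemma conv_eq_setIntegral (f : ℝ → ℝ) (t : ℝ) :
    ∫ s, f s * beta0 (t - s) = ∫ s in Set.Ioo (t - 1/2) (t + 1/2), f s := by
  have h1 : (fun s => f s * beta0 (t - s)) =ᵐ[volume]
      (fun s => (Set.Ioo (t - 1/2) (t + 1/2)).indicator f s) := by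
    filter_upwards [beta0_shift_ae t] with s hs
    rw [hs]
    by_cases hm : s ∈ Set.Ioo (t - 1/2) (t + 1/2)
    · rw [Set.indicator_of_mem hm, Set.indicator_of_mem hm, Pi.one_apply, mul_one]
    · rw [Set.indicator_of_notMem hm, Set.indicator_of_notMem hm, mul_zero]
  rw [integral_congr_ae h1, integral_indicator measurableSet_Ioo]

lemma hasDerivAt_maxpow (n : ℕ) (hn : 1 ≤ n) (x : ℝ) :
    HasDerivAt (fun y : ℝ => (max y 0) ^ (n + 1)) ((n + 1) * (max x 0) ^ n) x := by
  rcases lt_trichotomy x 0 with hx | hx | hx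
  · have hev : (fun y : ℝ => (max y 0) ^ (n + 1)) =ᶠ[nhds x] (fun _ => 0) := by
      filter_upwards [eventually_lt_nhds hx] with y hy
      rw [max_eq_right hy.le, zero_pow (Nat.succ_ne_zero n)]
    have h2 := (hasDerivAt_const x (0:ℝ)).congr_of_eventuallyEq hev
    have he : ((n:ℝ) + 1) * (max x 0) ^ n = 0 := by
      rw [max_eq_right hx.le, zero_pow (by omega : n ≠ 0), mul_zero]
    rwa [he]
  · subst hx
    rw [max_self, zero_pow (by omega : n ≠ 0), mul_zero]
    rw [hasDerivAt_iff_tendsto_slope]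
    have hbound : ∀ᶠ y in nhdsWithin (0:ℝ) {(0:ℝ)}ᶜ,
        ‖slope (fun y : ℝ => (max y 0) ^ (n + 1)) 0 y‖ ≤ |y| ^ n := by
      filter_upwards [self_mem_nhdsWithin] with y (hy : y ≠ 0)
      have h0 : (0:ℝ) ≤ max y 0 := le_max_right _ _
      have h1 : max y 0 ≤ |y| := max_le (le_abs_self y) (abs_nonneg y)
      have heq : ‖slope (fun y : ℝ => (max y 0) ^ (n + 1)) 0 y‖
          = (max y 0) ^ (n + 1) / |y| := by
        rw [slope_def_field]
        simp only [max_self, zero_pow (Nat.succ_ne_zero n), sub_zero]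
        rw [Real.norm_eq_abs, abs_div, abs_of_nonneg (pow_nonneg h0 _)]
      rw [heq, div_le_iff₀ (abs_pos.mpr hy)]
      calc (max y 0) ^ (n + 1) ≤ |y| ^ (n + 1) := pow_le_pow_left₀ h0 h1 _
        _ = |y| ^ n * |y| := by ring
    have htend : Tendsto (fun y : ℝ => |y| ^ n) (nhdsWithin (0:ℝ) {(0:ℝ)}ᶜ) (nhds 0) := by
      have h : Tendsto (fun y : ℝ => |y| ^ n) (nhds 0) (nhds (|(0:ℝ)| ^ n)) :=
        ((continuous_abs).pow n).tendsto (0:ℝ)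
      rw [abs_zero, zero_pow (by omega : n ≠ 0)] at h
      exact h.mono_left nhdsWithin_le_nhds
    exact squeeze_zero_norm' hbound htend
  · have hev : (fun y : ℝ => (max y 0) ^ (n + 1)) =ᶠ[nhds x] (fun y => y ^ (n + 1)) := by
      filter_upwards [eventually_gt_nhds hx] with y hy
      rw [max_eq_left hy.le]
    have h2 := (hasDerivAt_pow (n + 1) x).congr_of_eventuallyEq hev
    rw [max_eq_left hx.le]
    simpa using h2

lemma integral_maxpow (k : ℕ) (hk : 1 ≤ k) (c a b : ℝ) :
    ∫ s in a..b, (max (s + c) 0) ^ k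
      = ((max (b + c) 0) ^ (k + 1) - (max (a + c) 0) ^ (k + 1)) / (k + 1) := by
  obtain ⟨n, rfl⟩ : ∃ n, k = n + 1 := ⟨k - 1, by omega⟩
  have hcont : Continuous (fun s : ℝ => (max (s + c) 0) ^ (n + 1)) :=
    ((continuous_id.add continuous_const).max continuous_const).pow _
  have hderiv : ∀ y ∈ Set.uIcc a b,
      HasDerivAt (fun s : ℝ => (max (s + c) 0) ^ (n + 2) / ((n:ℝ) + 2))
        ((max (y + c) 0) ^ (n + 1)) y := by
    intro y _
    have h1 : HasDerivAt (fun s : ℝ => s + c) 1 y := (hasDerivAt_id y).add_const c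
    have h2' : HasDerivAt (fun s : ℝ => (max (s + c) 0) ^ (n + 2))
        ((((n:ℝ) + 1) + 1) * (max (y + c) 0) ^ (n + 1) * 1) y := by
      have h := (hasDerivAt_maxpow (n + 1) (by omega) (y + c)).comp y h1
      push_cast at h
      exact h
    have h3 := h2'.div_const ((n:ℝ) + 2)
    have he : ((((n:ℝ) + 1) + 1) * (max (y + c) 0) ^ (n + 1) * 1) / ((n:ℝ) + 2)
        = (max (y + c) 0) ^ (n + 1) := by
      field_simp
      ring
    rwa [he] at h3
  have hres := intervalIntegral.integral_eq_sub_of_hasDerivAt hderiv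
    (hcont.intervalIntegrable a b)
  rw [hres]
  push_cast
  ring

lemma pascal_sum (n : ℕ) (P : ℕ → ℝ) :
    ∑ j ∈ Finset.range (n + 1), (n.choose j : ℝ) * (-1) ^ j * (P j - P (j + 1))
      = ∑ j ∈ Finset.range (n + 2), ((n + 1).choose j : ℝ) * (-1) ^ j * P j := by
  set c : ℕ → ℝ := fun j => (n.choose j : ℝ) * (-1) ^ j with hc
  set A : ℝ := ∑ j ∈ Finset.range (n + 1), c j * P j with hA
  set B : ℝ := ∑ j ∈ Finset.range (n + 1), c j * P (j + 1) with hB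
  have hLHS : ∑ j ∈ Finset.range (n + 1), (n.choose j : ℝ) * (-1) ^ j * (P j - P (j + 1))
      = A - B := by
    rw [hA, hB, ← Finset.sum_sub_distrib]
    exact Finset.sum_congr rfl (fun j _ => by rw [hc]; ring)
  rw [hLHS]
  -- key: ∑_{range(n+2)} c j * P j = A (extra term is 0)
  have hext : ∑ j ∈ Finset.range (n + 2), c j * P j = A := by
    rw [Finset.sum_range_succ, hc]
    simp [Nat.choose_succ_self]
    rfl
  -- shift: ∑_{range(n+2)} c j * P j = (∑ i ∈ range (n+1), c (i+1) * P (i+1)) + c 0 * P 0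
  have hshift : ∑ j ∈ Finset.range (n + 2), c j * P j
      = (∑ i ∈ Finset.range (n + 1), c (i + 1) * P (i + 1)) + c 0 * P 0 :=
    Finset.sum_range_succ' (fun j => c j * P j) (n + 1)
  have hc0 : c 0 = 1 := by simp [hc]
  have hE : ∑ i ∈ Finset.range (n + 1), c (i + 1) * P (i + 1) = A - P 0 := by
    rw [← hext, hshift, hc0]; ring
  -- now expand RHS
  rw [Finset.sum_range_succ' (fun j => ((n + 1).choose j : ℝ) * (-1) ^ j * P j) (n + 1)]
  have hstep : ∀ i, ((n + 1).choose (i + 1) : ℝ) * (-1) ^ (i + 1) * P (i + 1)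
      = -(c i * P (i + 1)) + c (i + 1) * P (i + 1) := by
    intro i
    rw [Nat.choose_succ_succ, hc]
    push_cast
    ring
  rw [Finset.sum_congr rfl (fun i _ => hstep i), Finset.sum_add_distrib,
    Finset.sum_neg_distrib, hE]
  simp only [Nat.choose_zero_right, Nat.cast_one, pow_zero]
  rw [← hB]
  ring

lemma base_case (t : ℝ) :
    max (min (t + 1/2) (1/2) - max (t - 1/2) (-(1/2))) 0
      = max (t + 1) 0 - 2 * max t 0 + max (t - 1) 0 := by
  rcases le_total t (-1) with h | h
  · rw [max_eq_right (show t - 1/2 ≤ -(1/2) by linarith),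
      min_eq_left (show t + 1/2 ≤ 1/2 by linarith),
      max_eq_right (show t + 1/2 - -(1/2) ≤ 0 by linarith),
      max_eq_right (show t + 1 ≤ 0 by linarith),
      max_eq_right (show t ≤ 0 by linarith),
      max_eq_right (show t - 1 ≤ 0 by linarith)]
    ring
  · rcases le_total t 0 with h0 | h0
    · rw [max_eq_right (show t - 1/2 ≤ -(1/2) by linarith),
        min_eq_left (show t + 1/2 ≤ 1/2 by linarith),
        max_eq_left (show (0:ℝ) ≤ t + 1/2 - -(1/2) by linarith),
        max_eq_left (show (0:ℝ) ≤ t + 1 by linarith),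
        max_eq_right h0,
        max_eq_right (show t - 1 ≤ 0 by linarith)]
      ring
    · rcases le_total t 1 with h1 | h1
      · rw [max_eq_left (show -(1/2) ≤ t - 1/2 by linarith),
          min_eq_right (show (1:ℝ)/2 ≤ t + 1/2 by linarith),
          max_eq_left (show (0:ℝ) ≤ 1/2 - (t - 1/2) by linarith),
          max_eq_left (show (0:ℝ) ≤ t + 1 by linarith),
          max_eq_left h0,
          max_eq_right (show t - 1 ≤ 0 by linarith)]
        ring
      · rw [max_eq_left (show -(1/2) ≤ t - 1/2 by linarith),
          min_eq_right (show (1:ℝ)/2 ≤ t + 1/2 by linarith),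
          max_eq_right (show (1:ℝ)/2 - (t - 1/2) ≤ 0 by linarith),
          max_eq_left (show (0:ℝ) ≤ t + 1 by linarith),
          max_eq_left h0,
          max_eq_left (show (0:ℝ) ≤ t - 1 by linarith)]
        ring

lemma schoenberg_aux (n : ℕ) (t : ℝ) :
    betaB (n + 1) t = (1 / (Nat.factorial (n + 1) : ℝ)) *
      ∑ j ∈ Finset.range (n + 1 + 2),
        ((n + 1 + 1).choose j : ℝ) * (-1) ^ j *
          (max (t + (((n + 1 : ℕ) : ℝ) + 1) / 2 - j) 0) ^ (n + 1) := by
  induction n generalizing t with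
  | zero =>
    have h1 : betaB 1 t = ∫ s, beta0 s * beta0 (t - s) := rfl
    rw [h1, conv_eq_setIntegral beta0 t,
      integral_congr_ae (ae_restrict_of_ae beta0_ae),
      MeasureTheory.setIntegral_indicator measurableSet_Ioo, Set.Ioo_inter_Ioo]
    simp only [Pi.one_apply]
    rw [MeasureTheory.setIntegral_const, Real.volume_real_Ioo, smul_eq_mul, mul_one]
    have hbc := base_case t
    rw [show ((t + 1/2) ⊓ (1/2) : ℝ) = min (t + 1/2) (1/2) from rfl] at *
    rw [hbc]
    rw [Finset.sum_range_succ, Finset.sum_range_succ, Finset.sum_range_succ,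
      Finset.range_zero, Finset.sum_empty]
    norm_num
    ring_nf
  | succ m ih =>
    have hab : t - 1/2 ≤ t + 1/2 := by linarith
    set u : ℝ := t + ((((m + 1) + 1 : ℕ) : ℝ) + 1) / 2 with hu
    set P : ℕ → ℝ := fun j => (max (u - j) 0) ^ (m + 1 + 1) with hP
    set D : ℝ := (((m + 1 : ℕ) : ℝ) + 1) / 2 with hD
    have key : ∀ j : ℕ, (∫ s in (t - 1/2)..(t + 1/2), (max (s + D - j) 0) ^ (m + 1))
        = (P j - P (j + 1)) / ((m : ℝ) + 2) := by
      intro j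
      have h1 : ∀ s : ℝ, s + D - j = s + (D - j) := fun s => by ring
      simp only [h1]
      rw [integral_maxpow (m + 1) (by omega) (D - j) _ _]
      have e1 : t + 1/2 + (D - j) = u - j := by rw [hD, hu]; push_cast; ring
      have e2 : t - 1/2 + (D - j) = u - ((j + 1 : ℕ) : ℝ) := by
        rw [hD, hu]; push_cast; ring
      rw [e1, e2, hP]
      push_cast
      ring_nf
    have step1 : betaB (m + 1 + 1) t
        = ∫ s, ((1 / (Nat.factorial (m + 1) : ℝ)) *
            ∑ j ∈ Finset.range (m + 1 + 2),
              ((m + 1 + 1).choose j : ℝ) * (-1) ^ j *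
                (max (s + D - j) 0) ^ (m + 1)) * beta0 (t - s) := by
      show (∫ s, betaB (m + 1) s * beta0 (t - s)) = _
      congr 1
      funext s
      rw [ih s]
    rw [step1, conv_eq_setIntegral _ t,
      ← MeasureTheory.integral_Ioc_eq_integral_Ioo,
      ← intervalIntegral.integral_of_le hab,
      intervalIntegral.integral_const_mul]
    have hint : ∀ j ∈ Finset.range (m + 1 + 2),
        IntervalIntegrable
          (fun s : ℝ => ((m + 1 + 1).choose j : ℝ) * (-1) ^ j * (max (s + D - j) 0) ^ (m + 1))
          volume (t - 1/2) (t + 1/2) := by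
      intro j _
      apply Continuous.intervalIntegrable
      exact continuous_const.mul ((((continuous_id.add continuous_const).sub
        continuous_const).max continuous_const).pow _)
    rw [intervalIntegral.integral_finset_sum hint]
    have step2 : ∀ j ∈ Finset.range (m + 1 + 2),
        (∫ s in (t - 1/2)..(t + 1/2),
          ((m + 1 + 1).choose j : ℝ) * (-1) ^ j * (max (s + D - j) 0) ^ (m + 1))
        = (1 / ((m : ℝ) + 2)) *
            (((m + 2).choose j : ℝ) * (-1) ^ j * (P j - P (j + 1))) := by
      intro j _
      rw [intervalIntegral.integral_const_mul, key j]
      have : m + 1 + 1 = m + 2 := by omega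
      rw [this]
      ring
    rw [Finset.sum_congr rfl step2, ← Finset.mul_sum]
    have hr1 : m + 1 + 2 = m + 2 + 1 := by omega
    rw [hr1, pascal_sum (m + 2) P]
    have hr2 : m + 1 + 1 + 2 = m + 2 + 2 := by omega
    have hr3 : m + 1 + 1 + 1 = m + 2 + 1 := by omega
    rw [hr2, hr3]
    simp only [hP]
    rw [Finset.mul_sum, Finset.mul_sum, Finset.mul_sum]
    refine Finset.sum_congr rfl (fun j _ => ?_)
    have hfac : (Nat.factorial (m + 1 + 1) : ℝ) = ((m : ℝ) + 2) * (Nat.factorial (m + 1) : ℝ) := by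
      rw [Nat.factorial_succ]
      push_cast
      ring
    rw [hfac, ← one_div_mul_one_div ((m : ℝ) + 2) ((Nat.factorial (m + 1) : ℝ))]
    ring

/-- the Schoenberg closed-form representation
`β^k(t) = (1/k!) Σ_{j=0}^{k+1} C(k+1,j)(-1)^j (t+(k+1)/2-j)₊^k` for `k ≥ 1`. -/
theorem bspline_schoenberg_formula (k : ℕ) (hk : 1 ≤ k) (t : ℝ) :
    betaB k t = (1 / (Nat.factorial k : ℝ)) *
      ∑ j ∈ Finset.range (k + 2),
        ((k + 1).choose j : ℝ) * (-1) ^ j * (max (t + (k + 1) / 2 - j) 0) ^ k := by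
  obtain ⟨n, rfl⟩ : ∃ n, k = n + 1 := ⟨k - 1, by omega⟩
  exact schoenberg_aux n t
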